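/- For every n-dimensional nonnegative vector α, positive vector μ, and n×n substochastic nonnegative matrix P, there exists a nonnegative vector λ satisfying λ = α + (λ ∧ μ)P, where ∧ denotes entrywise minimum. -/

import Mathlib

open scoped Classical

/-- existence of a nonnegative solution to the Goodman–Massey
traffic equation λ = α + (λ ∧ μ) P for any substochastic nonnegative P. -/
theorem traffic_equation_has_nonneg_solution (n : ℕ)
    (α μ : Fin n → ℝ) (P : Matrix (Fin n) (Fin n) ℝ)
    (hα : ∀ i, 0 ≤ α i) (hμ : ∀ i, 0 < μ i)
    (hP : ∀ i j, 0 ≤ P i j) (hPsub : ∀ i, ∑ j, P i j ≤ 1) :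
    ∃ lam : Fin n → ℝ, (∀ i, 0 ≤ lam i) ∧
      ∀ i, lam i = α i + ∑ j, min (lam j) (μ j) * P j i := by
  -- the iteration map
  set F : (Fin n → ℝ) → (Fin n → ℝ) :=
    fun x i => α i + ∑ j, min (x j) (μ j) * P j i with hF
  -- F is monotone
  have hFmono : ∀ x y : Fin n → ℝ, (∀ j, x j ≤ y j) → ∀ i, F x i ≤ F y i := by
    intro x y hxy i
    refine add_le_add le_rfl (Finset.sum_le_sum fun j _ => ?_)
    exact mul_le_mul_of_nonneg_right (min_le_min (hxy j) le_rfl) (hP j i)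
  -- iterates
  set x : ℕ → Fin n → ℝ := fun k => F^[k] 0 with hx
  have hx0 : x 0 = 0 := rfl
  have hxsucc : ∀ k, x (k + 1) = F (x k) := by
    intro k
    simp [hx, Function.iterate_succ_apply']
  -- each iterate is ≥ 0
  have hxnonneg : ∀ k i, 0 ≤ x k i := by
    intro k
    induction k with
    | zero => intro i; simp [hx0]
    | succ k ih =>
      intro i
      rw [hxsucc k]
      have : 0 ≤ ∑ j, min (x k j) (μ j) * P j i :=
        Finset.sum_nonneg fun j _ =>
          mul_nonneg (le_min (ih j) (hμ j).le) (hP j i)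
      exact add_nonneg (hα i) this
  -- monotone in k
  have hstep : ∀ k i, x k i ≤ x (k + 1) i := by
    intro k
    induction k with
    | zero =>
      intro i
      rw [hxsucc 0, hx0]
      have : 0 ≤ ∑ j, min ((0 : Fin n → ℝ) j) (μ j) * P j i :=
        Finset.sum_nonneg fun j _ =>
          mul_nonneg (le_min le_rfl (hμ j).le) (hP j i)
      simpa [hF] using add_nonneg (hα i) this
    | succ k ih =>
      intro i
      rw [hxsucc k, hxsucc (k + 1)]
      exact hFmono _ _ ih i
  have hmono : ∀ i, Monotone fun k => x k i := fun i =>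
    monotone_nat_of_le_succ fun k => hstep k i
  -- uniform bound
  set B : Fin n → ℝ := fun i => α i + ∑ j, μ j * P j i with hB
  have hbdd : ∀ k i, x k i ≤ B i := by
    intro k i
    cases k with
    | zero =>
      rw [hx0]
      simp only [Pi.zero_apply]
      exact add_nonneg (hα i)
        (Finset.sum_nonneg fun j _ => mul_nonneg (hμ j).le (hP j i))
    | succ k =>
      rw [hxsucc k]
      refine add_le_add le_rfl (Finset.sum_le_sum fun j _ => ?_)
      exact mul_le_mul_of_nonneg_right (min_le_right _ _) (hP j i)
  have hbdd' : ∀ i, BddAbove (Set.range fun k => x k i) := by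
    intro i
    exact ⟨B i, fun y ⟨k, hk⟩ => hk ▸ hbdd k i⟩
  -- the limit
  set lam : Fin n → ℝ := fun i => ⨆ k, x k i with hlam
  have htend : ∀ i, Filter.Tendsto (fun k => x k i) Filter.atTop (nhds (lam i)) :=
    fun i => tendsto_atTop_ciSup (hmono i) (hbdd' i)
  refine ⟨lam, ?_, ?_⟩
  · intro i
    exact le_trans (hxnonneg 0 i) (le_ciSup (hbdd' i) 0)
  · intro i
    -- limit of x (k+1) i two ways
    have h1 : Filter.Tendsto (fun k => x (k + 1) i) Filter.atTop (nhds (lam i)) :=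
      (htend i).comp (Filter.tendsto_add_atTop_nat 1)
    have h2 : Filter.Tendsto (fun k => x (k + 1) i) Filter.atTop
        (nhds (α i + ∑ j, min (lam j) (μ j) * P j i)) := by
      have : ∀ k, x (k + 1) i = α i + ∑ j, min (x k j) (μ j) * P j i := by
        intro k; rw [hxsucc k]
      simp only [this]
      refine Filter.Tendsto.const_add _ ?_
      refine tendsto_finset_sum _ fun j _ => ?_
      exact (((htend j).min tendsto_const_nhds).mul_const _)
    exact tendsto_nhds_unique h1 h2
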